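/- There exists an initialized infinite computation π of the broadcast network with Fin(π) ≠ ∅ if and only if there exist pairwise distinct states s_1, …, s_m ∈ Q (m ≤ |Q|) with {s_1, …, s_m} ∩ F ≠ ∅, a configuration c with Set(c) = {s_1, …, s_m} reachable from some initial configuration, and a cycle ({s_1}, …, {s_m}) →_G^+ ({s_1}, …, {s_m}) in the graph G. -/

import Mathlib

/-- Communication operations over a message domain `D`: send `!a` or receive `?a`. -/
inductive Op (D : Type) where
  | send : D → Op D
  | recv : D → Op D
  deriving DecidableEq

/-- One transition `c →_a c'` of the broadcast network with sender `i` and receivers `R`: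
the sender takes a send transition on `a`, every receiver takes a receive transition on `a`,
and all other clients stay idle. -/
def StepAt {D Q : Type} (δ : Set (Q × Op D × Q)) (a : D) {k : ℕ}
    (c c' : Fin k → Q) (i : Fin k) (R : Set (Fin k)) : Prop :=
  i ∉ R ∧ (c i, Op.send a, c' i) ∈ δ ∧
    (∀ j ∈ R, (c j, Op.recv a, c' j) ∈ δ) ∧
    (∀ j, j ∉ R → j ≠ i → c' j = c j)

/-- A transition `c → c'` of the broadcast network (for some message, sender and receivers). -/
def Step {D Q : Type} (δ : Set (Q × Op D × Q)) {k : ℕ} (c c' : Fin k → Q) : Prop :=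
  ∃ (a : D) (i : Fin k) (R : Set (Fin k)), StepAt δ a c c' i R

/-- `post_{?a}(S)`: successors of `S` under receive transitions on `a`. -/
def postRecv {D Q : Type} (δ : Set (Q × Op D × Q)) (a : D) (S : Set Q) : Set Q :=
  {r' | ∃ r ∈ S, (r, Op.recv a, r') ∈ δ}

/-- `enabled_{?a}(S)`: states of `S` where a receive of `a` is enabled. -/
def enabledRecv {D Q : Type} (δ : Set (Q × Op D × Q)) (a : D) (S : Set Q) : Set Q :=
  {r | r ∈ S ∧ (postRecv δ a {r}).Nonempty}

/-- The edge relation `V →_G V'` of the graph `G` on tuples of subsets of `Q`. -/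
def GEdge {D Q : Type} (δ : Set (Q × Op D × Q)) {m : ℕ} (V V' : Fin m → Set Q) : Prop :=
  ∃ (a : D) (j : Fin m) (s s' : Q), s ∈ V j ∧ s' ∈ V' j ∧ (s, Op.send a, s') ∈ δ ∧
    ∃ Gen Kill : Fin m → Set Q,
      (∀ i, Gen i ⊆ postRecv δ a (V i)) ∧
      (∀ i, Kill i ⊆ enabledRecv δ a (V i)) ∧
      (∀ i, i ≠ j → V' i = (V i \ Kill i) ∪ Gen i) ∧
      (∃ U : Set Q, (U = V j ∨ U = V j \ {s}) ∧ V' j = ((U \ Kill j) ∪ Gen j) ∪ {s'}) ∧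
      (∀ i, ∀ q ∈ Kill i, (postRecv δ a {q} ∩ Gen i).Nonempty)

open Relation Classical

section Helpers

variable {α : Type*} {r : α → α → Prop}

/-- extract a finite path from a ReflTransGen -/
theorem rtg_extract {a b : α} (h : ReflTransGen r a b) :
    ∃ (p : ℕ) (f : ℕ → α), f 0 = a ∧ f p = b ∧ ∀ l < p, r (f l) (f (l + 1)) := by
  induction h with
  | refl => exact ⟨0, fun _ => a, rfl, rfl, by omega⟩
  | @tail b c hab hbc ih =>
    obtain ⟨p, f, h0, hp, hstep⟩ := ih
    refine ⟨p + 1, fun x => if x < p + 1 then f x else c, by simp [h0], by simp, ?_⟩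
    intro l hl
    by_cases hlp : l < p
    · simpa [Nat.lt_succ_of_lt hlp, show l + 1 < p + 1 by omega] using hstep l hlp
    · have : l = p := by omega
      subst this
      simpa [Nat.lt_succ_self, hp] using hbc

theorem tg_extract {a b : α} (h : TransGen r a b) :
    ∃ (p : ℕ) (f : ℕ → α), 0 < p ∧ f 0 = a ∧ f p = b ∧ ∀ l < p, r (f l) (f (l + 1)) := by
  obtain ⟨c, hac, hcb⟩ := (Relation.TransGen.tail'_iff).mp h
  obtain ⟨p, f, h0, hp, hstep⟩ := rtg_extract hac
  refine ⟨p + 1, fun x => if x < p + 1 then f x else b, by omega, by simp [h0], by simp, ?_⟩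
  intro l hl
  by_cases hlp : l < p
  · simpa [Nat.lt_succ_of_lt hlp, show l + 1 < p + 1 by omega] using hstep l hlp
  · have : l = p := by omega
    subst this
    simpa [Nat.lt_succ_self, hp] using hcb

theorem chain_rtg (f : ℕ → α) (p : ℕ) (hstep : ∀ l < p, r (f l) (f (l + 1))) :
    ReflTransGen r (f 0) (f p) := by
  induction p with
  | zero => exact ReflTransGen.refl
  | succ n ih =>
    exact ReflTransGen.tail (ih (fun l hl => hstep l (by omega))) (hstep n (by omega))

theorem chain_tg (f : ℕ → α) (p : ℕ) (hp : 0 < p) (hstep : ∀ l < p, r (f l) (f (l + 1))) :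
    TransGen r (f 0) (f p) := by
  obtain ⟨n, rfl⟩ : ∃ n, p = n + 1 := ⟨p - 1, by omega⟩
  exact TransGen.tail' (chain_rtg f n (fun l hl => hstep l (by omega))) (hstep n (by omega))

end Helpers

section Transfer

variable {D Q : Type} {δ : Set (Q × Op D × Q)}

/-- `Step` on a general finite index type, via an equivalence to `Fin k`. -/
def StepE (δ : Set (Q × Op D × Q)) {J : Type} {k : ℕ} (e : J ≃ Fin k) (c c' : J → Q) : Prop :=
  Step δ (c ∘ e.symm) (c' ∘ e.symm)

theorem stepE_of {J : Type} {k : ℕ} (e : J ≃ Fin k) {c c' : J → Q}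
    (a : D) (i : J) (R : Set J) (hiR : i ∉ R)
    (hsend : (c i, Op.send a, c' i) ∈ δ)
    (hrecv : ∀ t ∈ R, (c t, Op.recv a, c' t) ∈ δ)
    (hidle : ∀ t, t ∉ R → t ≠ i → c' t = c t) :
    StepE δ e c c' := by
  refine ⟨a, e i, e '' R, ?_, ?_, ?_, ?_⟩
  · intro h
    obtain ⟨t, htR, ht⟩ := h
    exact hiR (e.injective ht ▸ htR)
  · simpa using hsend
  · rintro j ⟨t, htR, rfl⟩
    simpa using hrecv t htR
  · intro j hjR hji
    have h1 : e.symm j ∉ R := fun h => hjR ⟨e.symm j, h, by simp⟩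
    have h2 : e.symm j ≠ i := fun h => hji (by rw [← h]; simp)
    simpa using hidle _ h1 h2

end Transfer

section Mult

variable {D Q : Type} {δ : Set (Q × Op D × Q)} {k0 M k : ℕ}

theorem mult_step (e : (Fin k0 × Fin M) ≃ Fin k) {c c' : Fin k0 → Q} (h : Step δ c c') :
    ReflTransGen (StepE δ e) (fun t => c t.1) (fun t => c' t.1) := by
  obtain ⟨a, i, R, hiR, hsend, hrecv, hidle⟩ := h
  set g : ℕ → (Fin k0 × Fin M) → Q := fun x t => if t.2.val < x then c' t.1 else c t.1 with hg
  have key : ∀ x ≤ M, ReflTransGen (StepE δ e) (fun t => c t.1) (g x) := by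
    intro x hx
    induction x with
    | zero =>
      have : g 0 = fun t => c t.1 := by funext t; simp [hg]
      rw [this]
    | succ n ih =>
      refine ReflTransGen.tail (ih (by omega)) ?_
      have hn : n < M := by omega
      refine stepE_of e a (i, ⟨n, hn⟩) {t | t.1 ∈ R ∧ t.2 = ⟨n, hn⟩} ?_ ?_ ?_ ?_
      · exact fun ht => hiR ht.1
      · simpa [hg] using hsend
      · rintro ⟨t1, t2⟩ ⟨ht1, ht2⟩
        simp only at ht1 ht2
        subst ht2
        simpa [hg] using hrecv t1 ht1
      · rintro ⟨t1, t2⟩ hnR hni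
        simp only [hg]
        by_cases h2 : t2 = ⟨n, hn⟩
        · subst h2
          have ht1R : t1 ∉ R := fun h => hnR ⟨h, rfl⟩
          have ht1i : t1 ≠ i := fun h => hni (by rw [h])
          simp [hidle t1 ht1R ht1i]
        · have : t2.val ≠ n := fun h => h2 (Fin.ext h)
          by_cases h3 : t2.val < n
          · simp [h3, show t2.val < n + 1 by omega]
          · simp [h3, show ¬ (t2.val < n + 1) by omega]
  have h2 := key M le_rfl
  have : g M = fun t => c' t.1 := by funext t; simp [hg, t.2.isLt]
  rwa [this] at h2

theorem mult_rtg (e : (Fin k0 × Fin M) ≃ Fin k) {c₀ c : Fin k0 → Q}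
    (h : ReflTransGen (Step δ) c₀ c) :
    ReflTransGen (StepE δ e) (fun t => c₀ t.1) (fun t => c t.1) := by
  induction h with
  | refl => exact ReflTransGen.refl
  | tail hab hbc ih => exact ReflTransGen.trans ih (mult_step e hbc)

end Mult

section Forward

variable {D Q : Type} {δ : Set (Q × Op D × Q)} {k m : ℕ}

theorem step_gedge (grp : Fin k → Fin m) {d d' : Fin k → Q} (h : Step δ d d') :
    GEdge δ (fun i => d '' {t | grp t = i}) (fun i => d' '' {t | grp t = i}) := by
  obtain ⟨a, i₀, R, hiR, hsend, hrecv, hidle⟩ := h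
  set j := grp i₀ with hj
  set Gen : Fin m → Set Q := fun i => d' '' {t | t ∈ R ∧ grp t = i} with hGen
  set Kill : Fin m → Set Q := fun i =>
    {q | q ∈ d '' {t | grp t = i} ∧ q ∉ d' '' {t | grp t = i} ∧ (i = j → q ≠ d i₀)} with hKill
  have killWitness : ∀ i q, q ∈ Kill i → ∃ t, grp t = i ∧ d t = q ∧ t ∈ R := by
    intro i q hq
    obtain ⟨hq1, hq2, hq3⟩ := hq
    obtain ⟨t, hti, rfl⟩ := hq1
    refine ⟨t, hti, rfl, ?_⟩
    by_contra htR
    by_cases hti₀ : t = i₀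
    · exact hq3 (by rw [← hti, hti₀]) (by rw [hti₀])
    · exact hq2 ⟨t, hti, hidle t htR hti₀⟩
  refine ⟨a, j, d i₀, d' i₀, ⟨i₀, rfl, rfl⟩, ⟨i₀, rfl, rfl⟩, hsend, Gen, Kill, ?_, ?_, ?_, ?_, ?_⟩
  · rintro i q' ⟨t, ⟨htR, hti⟩, rfl⟩
    exact ⟨d t, ⟨t, hti, rfl⟩, hrecv t htR⟩
  · intro i q hq
    obtain ⟨t, hti, htq, htR⟩ := killWitness i q hq
    exact ⟨hq.1, ⟨d' t, q, rfl, htq ▸ hrecv t htR⟩⟩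
  · intro i hij
    ext q'
    constructor
    · rintro ⟨t, hti, rfl⟩
      by_cases htR : t ∈ R
      · exact Or.inr ⟨t, ⟨htR, hti⟩, rfl⟩
      · have hti₀ : t ≠ i₀ := by intro he; exact hij (by rw [← hti, he])
        have hidle' := hidle t htR hti₀
        refine Or.inl ⟨⟨t, hti, hidle'.symm⟩, ?_⟩
        rintro ⟨_, h2, _⟩
        exact h2 ⟨t, hti, rfl⟩
    · rintro (⟨hmem, hnk⟩ | ⟨t, ⟨htR, hti⟩, rfl⟩)
      · by_contra hq'
        exact hnk ⟨hmem, hq', fun h => absurd h hij⟩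
      · exact ⟨t, hti, rfl⟩
  · by_cases hc : ∃ t, grp t = j ∧ t ≠ i₀ ∧ t ∉ R ∧ d t = d i₀
    · refine ⟨d '' {t | grp t = j}, Or.inl rfl, ?_⟩
      ext q'
      constructor
      · rintro ⟨t, htj, rfl⟩
        by_cases hti₀ : t = i₀
        · exact Or.inr (by rw [hti₀]; rfl)
        · by_cases htR : t ∈ R
          · exact Or.inl (Or.inr ⟨t, ⟨htR, htj⟩, rfl⟩)
          · have hidle' := hidle t htR hti₀
            refine Or.inl (Or.inl ⟨⟨t, htj, hidle'.symm⟩, ?_⟩)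
            rintro ⟨_, h2, _⟩
            exact h2 ⟨t, htj, rfl⟩
      · rintro ((⟨hqU, hqK⟩ | ⟨t, ⟨htR, htj⟩, rfl⟩) | hq')
        · by_cases hmem : q' ∈ d' '' {t | grp t = j}
          · exact hmem
          · have hq0 : q' = d i₀ := by
              by_contra hne
              exact hqK ⟨hqU, hmem, fun _ => hne⟩
            obtain ⟨t', htj', hne', hnR', htd'⟩ := hc
            exact absurd ⟨t', htj', (hidle t' hnR' hne').trans (htd'.trans hq0.symm)⟩ hmem
        · exact ⟨t, htj, rfl⟩
        · exact hq' ▸ ⟨i₀, rfl, rfl⟩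
    · refine ⟨d '' {t | grp t = j} \ {d i₀}, Or.inr rfl, ?_⟩
      ext q'
      constructor
      · rintro ⟨t, htj, rfl⟩
        by_cases hti₀ : t = i₀
        · exact Or.inr (by rw [hti₀]; rfl)
        · by_cases htR : t ∈ R
          · exact Or.inl (Or.inr ⟨t, ⟨htR, htj⟩, rfl⟩)
          · have hidle' := hidle t htR hti₀
            have hne : d' t ≠ d i₀ := by
              intro he
              exact hc ⟨t, htj, hti₀, htR, hidle' ▸ he⟩
            refine Or.inl (Or.inl ⟨⟨⟨t, htj, hidle'.symm⟩, hne⟩, ?_⟩)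
            rintro ⟨_, h2, _⟩
            exact h2 ⟨t, htj, rfl⟩
      · rintro ((⟨⟨hqU, hqne⟩, hqK⟩ | ⟨t, ⟨htR, htj⟩, rfl⟩) | hq')
        · by_contra hmem
          exact hqK ⟨hqU, hmem, fun _ => hqne⟩
        · exact ⟨t, htj, rfl⟩
        · exact hq' ▸ ⟨i₀, rfl, rfl⟩
  · intro i q hq
    obtain ⟨t, hti, htq, htR⟩ := killWitness i q hq
    exact ⟨d' t, ⟨q, rfl, htq ▸ hrecv t htR⟩, ⟨t, ⟨htR, hti⟩, rfl⟩⟩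

end Forward

inductive SimRole (Q : Type) where
  | recv : Q → SimRole Q
  | send : SimRole Q
  | keep : SimRole Q

def SimRole.target {Q : Type} (s' : Q) (q : Q) : SimRole Q → Q
  | .recv γ => γ
  | .send => s'
  | .keep => q

section Simulation

variable {D Q : Type} [Fintype Q] {δ : Set (Q × Op D × Q)} {m kJ : ℕ} {J : Type} [Fintype J]

theorem count_lower {L : ℕ} (f : Fin L → J) (S : Set J)
    (hinj : Function.Injective f) (hmem : ∀ ℓ, f ℓ ∈ S) : L ≤ S.ncard := by
  have h1 : (Set.univ : Set (Fin L)).ncard ≤ S.ncard :=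
    Set.ncard_le_ncard_of_injOn f (fun ℓ _ => hmem ℓ) (hinj.injOn) (Set.toFinite S)
  simpa [Set.ncard_univ] using h1

theorem simulate_edge (e : J ≃ Fin kJ) (g : J → Fin m) {V V' : Fin m → Set Q}
    (hE : GEdge δ V V') (L : ℕ) (hL : 0 < L)
    {c : J → Q} (H1 : ∀ t, c t ∈ V (g t))
    (H2 : ∀ i q, q ∈ V i → (Fintype.card Q + 2) * L ≤ {t | g t = i ∧ c t = q}.ncard) :
    ∃ c' : J → Q, Relation.TransGen (StepE δ e) c c' ∧ (∀ t, c' t ∈ V' (g t)) ∧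
      (∀ i q, q ∈ V' i → L ≤ {t | g t = i ∧ c' t = q}.ncard) := by
  classical
  obtain ⟨a, j, s, s', hs, hs', hsend, Gen, Kill, hGen, hKill, hV', ⟨U, hU, hVj⟩, hCond⟩ := hE
  -- basic set facts
  have hGenV' : ∀ i, Gen i ⊆ V' i := by
    intro i
    by_cases hij : i = j
    · subst hij
      rw [hVj]
      exact fun γ hγ => Or.inl (Or.inr hγ)
    · rw [hV' i hij]
      exact Set.subset_union_right
  have hUsub : U ⊆ V j := by
    rcases hU with h | h
    · exact h ▸ le_refl _
    · exact h ▸ Set.diff_subset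
  have hUV' : U \ Kill j ⊆ V' j := by
    rw [hVj]; exact fun q hq => Or.inl (Or.inl hq)
  have hKeep : ∀ i q, q ∈ V i → q ∉ Kill i → (i = j → q = s → s ∈ V' j) → q ∈ V' i := by
    intro i q hq hk hcase
    by_cases hij : i = j
    · subst hij
      by_cases hqs : q = s
      · exact hqs ▸ hcase rfl hqs
      · rcases hU with h | h
        · exact hUV' ⟨h ▸ hq, hk⟩
        · exact hUV' ⟨h ▸ ⟨hq, hqs⟩, hk⟩
    · rw [hV' i hij]
      exact Or.inl ⟨hq, hk⟩
  -- nonemptiness of J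
  have hJne : Nonempty J := by
    have h2 := H2 j s hs
    have hpos : 0 < {t | g t = j ∧ c t = s}.ncard :=
      lt_of_lt_of_le (by positivity) h2
    obtain ⟨t, -⟩ := (Set.ncard_pos (Set.toFinite _)).mp hpos
    exact ⟨t⟩
  -- choice of sources for Gen states
  have hsrcE : ∀ i γ, ∃ r, γ ∈ Gen i → r ∈ V i ∧ (r, Op.recv a, γ) ∈ δ := by
    intro i γ
    by_cases h : γ ∈ Gen i
    · obtain ⟨r, hr, hδ⟩ := hGen i h
      exact ⟨r, fun _ => ⟨hr, hδ⟩⟩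
    · exact ⟨s, fun h' => absurd h' h⟩
  choose src hsrcP using hsrcE
  -- choice of targets for killed states
  have htgtE : ∀ i q, ∃ γ, q ∈ Kill i → (q, Op.recv a, γ) ∈ δ ∧ γ ∈ Gen i := by
    intro i q
    by_cases h : q ∈ Kill i
    · obtain ⟨γ, ⟨r, hr, hδ⟩, hγ⟩ := hCond i q h
      rw [Set.mem_singleton_iff] at hr
      exact ⟨γ, fun _ => ⟨hr ▸ hδ, hγ⟩⟩
    · exact ⟨s, fun h' => absurd h' h⟩
  choose tgt htgtP using htgtE
  -- fiber embeddings
  set C := Fintype.card Q with hC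
  set eQ : Q ≃ Fin C := Fintype.equivFin Q with heQ
  have hembE : ∀ (i : Fin m) (r : Q), ∃ f : Fin (C + 2) × Fin L → J,
      r ∈ V i → Function.Injective f ∧ ∀ p, g (f p) = i ∧ c (f p) = r := by
    intro i r
    by_cases h : r ∈ V i
    · have hfin : Fintype.card (Fin (C + 2) × Fin L) ≤
          ((Set.toFinite {t | g t = i ∧ c t = r}).toFinset).card := by
        rw [← Set.ncard_eq_toFinset_card _ (Set.toFinite _)]
        simpa using H2 i r h
      obtain ⟨f, hf⟩ := Function.Embedding.exists_of_card_le_finset hfin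
      refine ⟨f, fun _ => ⟨f.injective, fun p => ?_⟩⟩
      have := hf ⟨p, rfl⟩
      rw [Finset.mem_coe, Set.Finite.mem_toFinset] at this
      exact this
    · exact ⟨fun _ => Classical.arbitrary J, fun h' => absurd h' h⟩
  choose emb hembP using hembE
  have slotGlt : ∀ x : Fin C, (x : ℕ) < C + 2 := fun x => by omega
  set slotG : Fin C → Fin (C + 2) := fun x => ⟨x, slotGlt x⟩ with hslotG
  set slotS : Fin (C + 2) := ⟨C, by omega⟩ with hslotS
  set slotK : Fin (C + 2) := ⟨C + 1, by omega⟩ with hslotK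
  set ℓ0 : Fin L := ⟨0, hL⟩ with hℓ0
  -- roles
  set genHit : J → Prop := fun t => ∃ γ, (γ ∈ Gen (g t) ∧ src (g t) γ = c t) ∧
      ∃ ℓ, emb (g t) (c t) (slotG (eQ γ), ℓ) = t with hgenHit
  set sendHit : J → Prop := fun t => g t = j ∧ c t = s ∧ ∃ ℓ : Fin L, emb j s (slotS, ℓ) = t
    with hsendHit
  set role : J → SimRole Q := fun t =>
    if h : genHit t then .recv (Classical.choose h)
    else if sendHit t then .send
    else if c t ∈ Kill (g t) then .recv (tgt (g t) (c t))
    else if g t = j ∧ c t = s ∧ s ∉ V' j then .send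
    else .keep with hrole
  set c' : J → Q := fun t => (role t).target s' (c t) with hc'
  set t₀ : J := emb j s (slotS, ℓ0) with ht₀
  set c₁ : J → Q := fun t => if role t = SimRole.send ∧ t ≠ t₀ then c t else c' t with hc₁
  have hembInj : ∀ i r, r ∈ V i → Function.Injective (emb i r) := fun i r h => (hembP i r h).1
  have hembFib : ∀ (i : Fin m) r, r ∈ V i → ∀ p, g (emb i r p) = i ∧ c (emb i r p) = r :=
    fun i r h => (hembP i r h).2
  -- role of gen-block points
  have K1 : ∀ (i : Fin m) (γ : Q) (ℓ : Fin L), γ ∈ Gen i → src i γ ∈ V i →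
      role (emb i (src i γ) (slotG (eQ γ), ℓ)) = SimRole.recv γ := by
    intro i γ ℓ hγ hsrcV
    set t : J := emb i (src i γ) (slotG (eQ γ), ℓ) with htdef
    have hg : g t = i := (hembFib i _ hsrcV _).1
    have hcv : c t = src i γ := (hembFib i _ hsrcV _).2
    have hwit : genHit t := by
      refine ⟨γ, ⟨by rw [hg]; exact hγ, by rw [hg, hcv]⟩, ℓ, ?_⟩
      rw [hg, hcv]
    have hch : Classical.choose hwit = γ := by
      obtain ⟨⟨hγ', hsrc'⟩, ℓ', hembeq'⟩ := Classical.choose_spec hwit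
      set γ'' := Classical.choose hwit with hgd
      clear_value γ''
      rw [hg, hcv] at hembeq'
      have := hembInj i _ hsrcV (hembeq'.trans htdef)
      have h2 : slotG (eQ γ'') = slotG (eQ γ) := congrArg Prod.fst this
      have h3 : (eQ γ'' : ℕ) = (eQ γ : ℕ) := congrArg (fun z : Fin (C + 2) => (z : ℕ)) h2
      exact eQ.injective (Fin.ext h3)
    simp only [hrole]
    rw [dif_pos hwit, hch]
  -- role of sender-block points
  have K3 : ∀ ℓ : Fin L, role (emb j s (slotS, ℓ)) = SimRole.send := by
    intro ℓ
    set t : J := emb j s (slotS, ℓ) with htdef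
    have hg : g t = j := (hembFib j s hs _).1
    have hcv : c t = s := (hembFib j s hs _).2
    have hng : ¬ genHit t := by
      rintro ⟨γ, -, ℓ', heq⟩
      rw [hg, hcv] at heq
      have := hembInj j s hs (heq.trans htdef)
      have h2 : slotG (eQ γ) = slotS := congrArg Prod.fst this
      have h3 : ((eQ γ : Fin C) : ℕ) = C := congrArg (fun z : Fin (C + 2) => (z : ℕ)) h2
      exact absurd h3 (Nat.ne_of_lt (eQ γ).isLt)
    have hsh : sendHit t := ⟨hg, hcv, ℓ, rfl⟩
    simp only [hrole]
    rw [dif_neg hng, if_pos hsh]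
  -- role of keeper-block points
  have K1K : ∀ (i : Fin m) (q' : Q) (ℓ : Fin L), q' ∈ V i → q' ∉ Kill i →
      (i = j → q' = s → s ∈ V' j) → role (emb i q' (slotK, ℓ)) = SimRole.keep := by
    intro i q' ℓ hq' hk hcase
    set t : J := emb i q' (slotK, ℓ) with htdef
    have hg : g t = i := (hembFib i q' hq' _).1
    have hcv : c t = q' := (hembFib i q' hq' _).2
    have hng : ¬ genHit t := by
      rintro ⟨γ, -, ℓ', heq⟩
      rw [hg, hcv] at heq
      have := hembInj i q' hq' (heq.trans htdef)
      have h2 : slotG (eQ γ) = slotK := congrArg Prod.fst this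
      have h3 : ((eQ γ : Fin C) : ℕ) = C + 1 := congrArg (fun z : Fin (C + 2) => (z : ℕ)) h2
      have := (eQ γ).isLt
      omega
    have hns : ¬ sendHit t := by
      rintro ⟨hgj, hcs, ℓ', heq⟩
      have hij : i = j := by rw [← hg, hgj]
      have hqs : q' = s := by rw [← hcv, hcs]
      subst hij; subst hqs
      have := hembInj i q' hq' (heq.trans htdef)
      have h2 : slotS = slotK := congrArg Prod.fst this
      have h3 : C = C + 1 := congrArg (fun z : Fin (C + 2) => (z : ℕ)) h2
      omega
    have hnk : ¬ (c t ∈ Kill (g t)) := by rw [hg, hcv]; exact hk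
    have hnsd : ¬ (g t = j ∧ c t = s ∧ s ∉ V' j) := by
      rintro ⟨hgj, hcs, hnsV⟩
      exact hnsV (hcase (by rw [← hg, hgj]) (by rw [← hcv, hcs]))
    simp only [hrole]
    rw [dif_neg hng, if_neg hns, if_neg hnk, if_neg hnsd]
  -- receive roles are legal receives into Gen
  have K4 : ∀ t γ, role t = SimRole.recv γ → (c t, Op.recv a, γ) ∈ δ ∧ γ ∈ Gen (g t) := by
    intro t γ h
    by_cases h1 : genHit t
    · have hr : role t = SimRole.recv (Classical.choose h1) := by
        simp only [hrole]; rw [dif_pos h1]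
      rw [hr] at h
      injection h with h'
      obtain ⟨⟨hγ', hsrc'⟩, -⟩ := Classical.choose_spec h1
      rw [← h']
      have hδ := (hsrcP (g t) _ hγ').2
      rw [hsrc'] at hδ
      exact ⟨hδ, hγ'⟩
    · by_cases h2 : sendHit t
      · have hr : role t = SimRole.send := by
          simp only [hrole]; rw [dif_neg h1, if_pos h2]
        rw [hr] at h; cases h
      · by_cases h3 : c t ∈ Kill (g t)
        · have hr : role t = SimRole.recv (tgt (g t) (c t)) := by
            simp only [hrole]; rw [dif_neg h1, if_neg h2, if_pos h3]
          rw [hr] at h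
          injection h with h'
          rw [← h']
          exact htgtP (g t) (c t) h3
        · by_cases h4 : g t = j ∧ c t = s ∧ s ∉ V' j
          · have hr : role t = SimRole.send := by
              simp only [hrole]; rw [dif_neg h1, if_neg h2, if_neg h3, if_pos h4]
            rw [hr] at h; cases h
          · have hr : role t = SimRole.keep := by
              simp only [hrole]; rw [dif_neg h1, if_neg h2, if_neg h3, if_neg h4]
            rw [hr] at h; cases h
  -- send roles are at (j, s)
  have K5 : ∀ t, role t = SimRole.send → g t = j ∧ c t = s := by
    intro t h
    by_cases h1 : genHit t
    · have hr : role t = SimRole.recv (Classical.choose h1) := by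
        simp only [hrole]; rw [dif_pos h1]
      rw [hr] at h; cases h
    · by_cases h2 : sendHit t
      · have h2' : g t = j ∧ c t = s ∧ ∃ ℓ : Fin L, emb j s (slotS, ℓ) = t := h2
        exact ⟨h2'.1, h2'.2.1⟩
      · by_cases h3 : c t ∈ Kill (g t)
        · have hr : role t = SimRole.recv (tgt (g t) (c t)) := by
            simp only [hrole]; rw [dif_neg h1, if_neg h2, if_pos h3]
          rw [hr] at h; cases h
        · by_cases h4 : g t = j ∧ c t = s ∧ s ∉ V' j
          · exact ⟨h4.1, h4.2.1⟩
          · have hr : role t = SimRole.keep := by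
              simp only [hrole]; rw [dif_neg h1, if_neg h2, if_neg h3, if_neg h4]
            rw [hr] at h; cases h
  have K6 : ∀ t, role t = SimRole.keep →
      c t ∉ Kill (g t) ∧ ¬ (g t = j ∧ c t = s ∧ s ∉ V' j) := by
    intro t h
    by_cases h1 : genHit t
    · have hr : role t = SimRole.recv (Classical.choose h1) := by
        simp only [hrole]; rw [dif_pos h1]
      rw [hr] at h; cases h
    · by_cases h2 : sendHit t
      · have hr : role t = SimRole.send := by
          simp only [hrole]; rw [dif_neg h1, if_pos h2]
        rw [hr] at h; cases h
      · by_cases h3 : c t ∈ Kill (g t)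
        · have hr : role t = SimRole.recv (tgt (g t) (c t)) := by
            simp only [hrole]; rw [dif_neg h1, if_neg h2, if_pos h3]
          rw [hr] at h; cases h
        · by_cases h4 : g t = j ∧ c t = s ∧ s ∉ V' j
          · have hr : role t = SimRole.send := by
              simp only [hrole]; rw [dif_neg h1, if_neg h2, if_neg h3, if_pos h4]
            rw [hr] at h; cases h
          · exact ⟨h3, h4⟩
  have hrt₀ : role t₀ = SimRole.send := K3 ℓ0
  have hgt₀ : g t₀ = j := (hembFib j s hs _).1
  have hct₀ : c t₀ = s := (hembFib j s hs _).2
  -- values of c'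
  have hc'recv : ∀ t γ, role t = SimRole.recv γ → c' t = γ := by
    intro t γ h; simp only [hc', h, SimRole.target]
  have hc'send : ∀ t, role t = SimRole.send → c' t = s' := by
    intro t h; simp only [hc', h, SimRole.target]
  have hc'keep : ∀ t, role t = SimRole.keep → c' t = c t := by
    intro t h; simp only [hc', h, SimRole.target]
  -- the receiver set
  -- the main step
  have main : StepE δ e c c₁ := by
    refine stepE_of e a t₀ {t | ∃ γ, role t = SimRole.recv γ} ?_ ?_ ?_ ?_
    · rintro ⟨γ, h⟩
      rw [hrt₀] at h
      cases h
    · have h1 : c₁ t₀ = c' t₀ := by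
        simp only [hc₁, if_neg (by simp : ¬ (role t₀ = SimRole.send ∧ t₀ ≠ t₀))]
      rw [h1, hc'send t₀ hrt₀, hct₀]
      exact hsend
    · rintro t ⟨γ, h⟩
      have h1 : c₁ t = c' t := by
        simp only [hc₁, if_neg (show ¬ (role t = SimRole.send ∧ t ≠ t₀) by
          rintro ⟨hh, -⟩; rw [h] at hh; cases hh)]
      rw [h1, hc'recv t γ h]
      exact (K4 t γ h).1
    · intro t htR hti
      cases hrt : role t with
      | recv γ => exact absurd ⟨γ, hrt⟩ htR
      | send =>
        simp only [hc₁, if_pos (show role t = SimRole.send ∧ t ≠ t₀ from ⟨hrt, hti⟩)]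
      | keep =>
        have h1 : c₁ t = c' t := by
          simp only [hc₁, if_neg (show ¬ (role t = SimRole.send ∧ t ≠ t₀) by
            rintro ⟨hh, -⟩; rw [hrt] at hh; cases hh)]
        rw [h1, hc'keep t hrt]
  -- extra send steps
  have extra : ∀ E : Finset J, (∀ t ∈ E, role t = SimRole.send ∧ t ≠ t₀) →
      Relation.ReflTransGen (StepE δ e) c₁ (fun t => if t ∈ E then s' else c₁ t) := by
    intro E
    induction E using Finset.induction_on with
    | empty =>
      intro _
      have : (fun t => if t ∈ (∅ : Finset J) then s' else c₁ t) = c₁ := by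
        funext t; simp
      rw [this]
    | @insert x E hx ih =>
      intro hprop
      have hstep : StepE δ e (fun t => if t ∈ E then s' else c₁ t)
          (fun t => if t ∈ insert x E then s' else c₁ t) := by
        refine stepE_of e a x ∅ (by simp) ?_ (by simp) ?_
        · have hx1 : (if x ∈ E then s' else c₁ x) = c₁ x := by simp [hx]
          have hx2 : (if x ∈ insert x E then s' else c₁ x) = s' := by simp
          rw [hx1, hx2]
          have hrx := (hprop x (Finset.mem_insert_self x E)).1
          have hnx := (hprop x (Finset.mem_insert_self x E)).2
          have : c₁ x = c x := by
            simp only [hc₁, if_pos (show role x = SimRole.send ∧ x ≠ t₀ from ⟨hrx, hnx⟩)]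
          rw [this, (K5 x hrx).2]
          exact hsend
        · intro t _ htx
          simp [Finset.mem_insert, htx]
      exact Relation.ReflTransGen.tail
        (ih (fun t ht => hprop t (Finset.mem_insert_of_mem ht))) hstep
  set E : Finset J := Finset.univ.filter (fun t => role t = SimRole.send ∧ t ≠ t₀) with hE
  have hEfin : (fun t => if t ∈ E then s' else c₁ t) = c' := by
    funext t
    by_cases ht : t ∈ E
    · have := (Finset.mem_filter.mp ht).2
      rw [if_pos ht, hc'send t this.1]
    · have hnt : ¬ (role t = SimRole.send ∧ t ≠ t₀) := by
        intro hh
        exact ht (Finset.mem_filter.mpr ⟨Finset.mem_univ t, hh⟩)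
      rw [if_neg ht]
      simp only [hc₁, if_neg hnt]
  have htrans : Relation.TransGen (StepE δ e) c c' := by
    refine Relation.TransGen.head'_iff.mpr ⟨c₁, main, ?_⟩
    have h2 := extra E (fun t ht => (Finset.mem_filter.mp ht).2)
    rwa [hEfin] at h2
  -- the invariant
  have hinv : ∀ t, c' t ∈ V' (g t) := by
    intro t
    cases hrt : role t with
    | recv γ =>
      rw [hc'recv t γ hrt]
      exact hGenV' (g t) (K4 t γ hrt).2
    | send =>
      rw [hc'send t hrt, (K5 t hrt).1]
      exact hs'
    | keep =>
      rw [hc'keep t hrt]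
      obtain ⟨hk, hnsd⟩ := K6 t hrt
      refine hKeep (g t) (c t) (H1 t) hk ?_
      intro hgj hcs
      by_contra hns
      exact hnsd ⟨hgj, hcs, hns⟩
  -- the counting
  have hcount : ∀ i q', q' ∈ V' i → L ≤ {t | g t = i ∧ c' t = q'}.ncard := by
    have genCase : ∀ i q', q' ∈ Gen i → L ≤ {t | g t = i ∧ c' t = q'}.ncard := by
      intro i q' hγ
      have hsrcV := (hsrcP i q' hγ).1
      refine count_lower (fun ℓ => emb i (src i q') (slotG (eQ q'), ℓ)) _ ?_ ?_
      · intro ℓ₁ ℓ₂ h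
        exact congrArg Prod.snd (hembInj i _ hsrcV h)
      · intro ℓ
        exact ⟨(hembFib i _ hsrcV _).1, hc'recv _ q' (K1 i q' ℓ hγ hsrcV)⟩
    have keepCase : ∀ i q', q' ∈ V i → q' ∉ Kill i → (i = j → q' = s → s ∈ V' j) →
        L ≤ {t | g t = i ∧ c' t = q'}.ncard := by
      intro i q' hv hk hcase
      refine count_lower (fun ℓ => emb i q' (slotK, ℓ)) _ ?_ ?_
      · intro ℓ₁ ℓ₂ h
        exact congrArg Prod.snd (hembInj i q' hv h)
      · intro ℓ
        refine ⟨(hembFib i q' hv _).1, ?_⟩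
        rw [hc'keep _ (K1K i q' ℓ hv hk hcase)]
        exact (hembFib i q' hv _).2
    intro i q' hq'
    by_cases hij : i = j
    · subst hij
      rw [hVj] at hq'
      rcases hq' with (⟨hU', hk⟩ | hγ) | hq''
      · exact keepCase i q' (hUsub hU') hk (fun _ hqs => hqs ▸ hUV' ⟨hU', hk⟩)
      · exact genCase i q' hγ
      · rw [Set.mem_singleton_iff] at hq''
        subst hq''
        refine count_lower (fun ℓ => emb i s (slotS, ℓ)) _ ?_ ?_
        · intro ℓ₁ ℓ₂ h
          exact congrArg Prod.snd (hembInj i s hs h)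
        · intro ℓ
          exact ⟨(hembFib i s hs _).1, hc'send _ (K3 ℓ)⟩
    · rw [hV' i hij] at hq'
      rcases hq' with ⟨hv, hk⟩ | hγ
      · exact keepCase i q' hv hk (fun h => absurd h hij)
      · exact genCase i q' hγ
  exact ⟨c', htrans, hinv, hcount⟩

end Simulation


/-- There is an initialized infinite computation `π` of the broadcast network with
`Fin(π) ≠ ∅` iff there are pairwise distinct states `s 0, …, s (m-1)` (with `m ≤ |Q|`) such
that `{s 0, …, s (m-1)} ∩ F ≠ ∅`, some configuration `c` with `Set(c) = {s 0, …, s (m-1)}`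
is reachable from an initial configuration, and there is a cycle
`({s 0}, …, {s (m-1)}) →_G⁺ ({s 0}, …, {s (m-1)})` in the graph `G`. -/
theorem liveness_iff_graph_cycle {D Q : Type} [Fintype Q] (δ : Set (Q × Op D × Q))
    (I F : Set Q) :
    (∃ (k : ℕ) (cfg : ℕ → Fin k → Q),
      (∀ t, cfg 0 t ∈ I) ∧
      (∀ j, Step δ (cfg j) (cfg (j + 1))) ∧
      {i : Fin k | ∀ N, ∃ j ≥ N, cfg j i ∈ F}.Nonempty) ↔
    (∃ (m : ℕ) (s : Fin m → Q), Function.Injective s ∧ m ≤ Fintype.card Q ∧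
      (Set.range s ∩ F).Nonempty ∧
      (∃ (k : ℕ) (c₀ c : Fin k → Q), (∀ t, c₀ t ∈ I) ∧
        Relation.ReflTransGen (Step δ) c₀ c ∧ Set.range c = Set.range s) ∧
      Relation.TransGen (GEdge δ) (fun i => ({s i} : Set Q)) (fun i => {s i})) := by
  classical
  constructor
  · rintro ⟨k, cfg, hinit, hsteps, i, hi⟩
    -- the set of times where client i is in F is infinite
    have hSinf : {n : ℕ | cfg n i ∈ F}.Infinite := by
      by_contra hfin
      rw [Set.not_infinite] at hfin
      obtain ⟨N, hN⟩ := hfin.bddAbove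
      obtain ⟨j0, hj0N, hj0F⟩ := hi (N + 1)
      have := hN hj0F
      omega
    obtain ⟨n0, hn0, n1, hn1, hne, heq⟩ :=
      Set.Infinite.exists_ne_map_eq_of_mapsTo hSinf (Set.mapsTo_univ cfg _) Set.finite_univ
    obtain ⟨j0, j1, hlt, hj0F, hcfgeq⟩ :
        ∃ j0 j1, j0 < j1 ∧ cfg j0 i ∈ F ∧ cfg j0 = cfg j1 := by
      rcases lt_or_gt_of_ne hne with h | h
      · exact ⟨n0, n1, h, hn0, heq⟩
      · exact ⟨n1, n0, h, hn1, heq.symm⟩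
    set c : Fin k → Q := cfg j0 with hc
    set rset : Finset Q := (Set.finite_range c).toFinset with hrset
    set m : ℕ := rset.card with hm
    set en : Fin m → Q := fun i' => (rset.equivFin.symm i' : Q) with hen
    have hen_inj : Function.Injective en := by
      intro x y h
      exact rset.equivFin.symm.injective (Subtype.ext h)
    have hrange : Set.range en = Set.range c := by
      ext q
      constructor
      · rintro ⟨x, rfl⟩
        exact (Set.Finite.mem_toFinset (Set.finite_range c)).mp (rset.equivFin.symm x).2
      · intro hq
        have hq' : q ∈ rset := (Set.Finite.mem_toFinset (Set.finite_range c)).mpr hq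
        refine ⟨rset.equivFin ⟨q, hq'⟩, ?_⟩
        simp [hen]
    have hgex : ∀ t, ∃ i', en i' = c t := by
      intro t
      have : c t ∈ Set.range en := by rw [hrange]; exact ⟨t, rfl⟩
      exact this
    choose grp hgrp using hgex
    have habs : (fun i' => c '' {t | grp t = i'}) = (fun i' => ({en i'} : Set Q)) := by
      funext i'
      ext q
      constructor
      · rintro ⟨t, hti, rfl⟩
        have : c t = en i' := by rw [← hgrp t, hti]
        exact this ▸ rfl
      · intro hq
        rw [Set.mem_singleton_iff] at hq
        have : en i' ∈ Set.range c := by rw [← hrange]; exact ⟨i', rfl⟩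
        obtain ⟨t, htc⟩ := this
        have hgt : grp t = i' := hen_inj (by rw [hgrp t, htc])
        exact ⟨t, hgt, htc.trans hq.symm⟩
    refine ⟨m, en, hen_inj, ?_, ?_, ⟨k, cfg 0, c, hinit, ?_, hrange.symm ▸ rfl⟩, ?_⟩
    · rw [hm]
      have := Finset.card_le_univ rset
      simpa using this
    · have h1 : c i ∈ Set.range en := by rw [hrange]; exact ⟨i, rfl⟩
      exact ⟨c i, h1, hj0F⟩
    · exact chain_rtg cfg j0 (fun l _ => hsteps l)
    · have hcyc := chain_tg (r := GEdge δ)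
        (fun l => fun i' => cfg (j0 + l) '' {t | grp t = i'}) (j1 - j0) (by omega)
        (fun l hl => by
          have hadd : j0 + (l + 1) = (j0 + l) + 1 := by omega
          show GEdge δ (fun i' => cfg (j0 + l) '' {t | grp t = i'})
            (fun i' => cfg (j0 + (l + 1)) '' {t | grp t = i'})
          rw [hadd]
          exact step_gedge grp (hsteps (j0 + l)))
      have hcyc' : Relation.TransGen (GEdge δ)
          (fun i' => cfg (j0 + 0) '' {t | grp t = i'})
          (fun i' => cfg (j0 + (j1 - j0)) '' {t | grp t = i'}) := hcyc
      have h1 : j0 + (j1 - j0) = j1 := by omega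
      rw [h1, Nat.add_zero, ← hcfgeq] at hcyc'
      rw [habs] at hcyc'
      exact hcyc'
  · rintro ⟨m, en, hinj, hm, ⟨qF, hqFr, hqFF⟩, ⟨k0, c₀, c, hc0I, hreach, hrangec⟩, hcyc⟩
    obtain ⟨n, W, hn, hW0, hWn, hWstep⟩ := tg_extract hcyc
    set C : ℕ := Fintype.card Q with hCdef
    set M : ℕ := (C + 2) ^ n with hMdef
    have hMpos : 0 < M := by positivity
    set e : (Fin k0 × Fin M) ≃ Fin (Fintype.card (Fin k0 × Fin M)) :=
      Fintype.equivFin _ with hedef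
    have hgex : ∀ t : Fin k0, ∃ i', en i' = c t := by
      intro t
      have : c t ∈ Set.range en := by rw [← hrangec]; exact ⟨t, rfl⟩
      exact this
    choose grp0 hgrp0 using hgex
    set g : Fin k0 × Fin M → Fin m := fun t => grp0 t.1 with hgdef
    set cst : Fin k0 × Fin M → Q := fun t => c t.1 with hcstdef
    have hcst : ∀ t, cst t = en (g t) := fun t => (hgrp0 t.1).symm
    -- iterate the simulation along the cycle
    have iter : ∀ l, l ≤ n → ∃ cl : Fin k0 × Fin M → Q,
        Relation.ReflTransGen (StepE δ e) cst cl ∧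
        (0 < l → Relation.TransGen (StepE δ e) cst cl) ∧
        (∀ t, cl t ∈ W l (g t)) ∧
        (∀ i q, q ∈ W l i → (C + 2) ^ (n - l) ≤ {t | g t = i ∧ cl t = q}.ncard) := by
      intro l
      induction l with
      | zero =>
        intro _
        refine ⟨cst, Relation.ReflTransGen.refl, by omega, ?_, ?_⟩
        · intro t
          rw [hW0, hcst t]
          rfl
        · intro i q hq
          rw [hW0] at hq
          rw [Set.mem_singleton_iff] at hq
          subst hq
          have : en i ∈ Set.range c := by rw [hrangec]; exact ⟨i, rfl⟩
          obtain ⟨t0, ht0⟩ := this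
          have hgt0 : grp0 t0 = i := hinj (by rw [hgrp0 t0, ht0])
          refine count_lower (fun x => (t0, x)) _ ?_ ?_
          · intro x y h
            exact congrArg Prod.snd h
          · intro x
            exact ⟨hgt0, ht0⟩
      | succ l ih =>
        intro hl
        obtain ⟨cl, hrtg, -, hH1, hH2⟩ := ih (by omega)
        have hLpos : 0 < (C + 2) ^ (n - (l + 1)) := by positivity
        have hstep := simulate_edge e g (hWstep l (by omega)) ((C + 2) ^ (n - (l + 1)))
          hLpos hH1 ?_
        · obtain ⟨c', htrans, hinv, hcount⟩ := hstep
          exact ⟨c', hrtg.trans htrans.to_reflTransGen,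
            fun _ => Relation.TransGen.trans_right hrtg htrans, hinv, hcount⟩
        · intro i q hq
          have := hH2 i q hq
          have hexp : (C + 2) * (C + 2) ^ (n - (l + 1)) = (C + 2) ^ (n - l) := by
            have : n - l = (n - (l + 1)) + 1 := by omega
            rw [this, pow_succ]
            ring
          rw [hexp]
          exact this
    obtain ⟨cn, -, htgn, hH1n, -⟩ := iter n le_rfl
    have hcneq : cn = cst := by
      funext t
      have := hH1n t
      rw [hWn, Set.mem_singleton_iff] at this
      rw [this, hcst t]
    have hcycle : Relation.TransGen (StepE δ e) cst cst := hcneq ▸ htgn hn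
    have hpre : Relation.ReflTransGen (StepE δ e) (fun t => c₀ t.1) cst :=
      mult_rtg e hreach
    obtain ⟨p, fP, hfP0, hfPp, hfPs⟩ := rtg_extract hpre
    obtain ⟨qn, fC, hq, hfC0, hfCq, hfCs⟩ := tg_extract hcycle
    set cfgJ : ℕ → Fin k0 × Fin M → Q :=
      fun x => if x < p then fP x else fC ((x - p) % qn) with hcfgJ
    have hmod : ∀ x : ℕ, ¬ x < p → fC ((x + 1 - p) % qn) = fC ((x - p) % qn + 1) ∨
        ((x - p) % qn + 1 = qn ∧ fC ((x + 1 - p) % qn) = fC 0) := by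
      intro x hx
      have h1 : x + 1 - p = (x - p) + 1 := by omega
      have hA : ((x - p) + 1) % qn = ((x - p) % qn + 1) % qn := by
        conv_lhs => rw [Nat.add_mod]
        by_cases hq1 : qn = 1
        · simp [hq1]
        · rw [Nat.one_mod_eq_one.mpr hq1]
      rw [h1, hA]
      by_cases h2 : (x - p) % qn + 1 = qn
      · right
        exact ⟨h2, by rw [h2, Nat.mod_self]⟩
      · left
        have h3 : (x - p) % qn < qn := Nat.mod_lt _ (by omega)
        rw [Nat.mod_eq_of_lt (by omega)]
    have hstepsJ : ∀ x, StepE δ e (cfgJ x) (cfgJ (x + 1)) := by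
      intro x
      by_cases hx : x + 1 < p
      · have hx0 : x < p := by omega
        simp only [hcfgJ, if_pos hx, if_pos hx0]
        exact hfPs x (by omega)
      · by_cases hx1 : x < p
        · -- x + 1 = p
          have hxp : x + 1 = p := by omega
          simp only [hcfgJ, if_pos hx1, if_neg hx]
          have : (x + 1 - p) % qn = 0 := by
            rw [show x + 1 - p = 0 from by omega]
            exact Nat.zero_mod qn
          rw [this, hfC0, ← hfPp, ← hxp]
          exact hfPs x (by omega)
        · simp only [hcfgJ, if_neg hx1, if_neg (show ¬ x + 1 < p by omega)]
          have hlt : (x - p) % qn < qn := Nat.mod_lt _ (by omega)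
          rcases hmod x hx1 with h | ⟨h2, h3⟩
          · rw [h]
            exact hfCs _ hlt
          · rw [h3, hfC0, ← hfCq]
            have hst := hfCs ((x - p) % qn) hlt
            rw [h2] at hst
            exact hst
    -- the observed client
    obtain ⟨tF, htF⟩ : ∃ t0 : Fin k0, c t0 = qF := by
      have : qF ∈ Set.range c := by rw [hrangec]; exact hqFr
      exact this
    set tJ : Fin k0 × Fin M := (tF, ⟨0, hMpos⟩) with htJ
    have hvisit : ∀ N, ∃ x ≥ N, cfgJ x tJ ∈ F := by
      intro N
      refine ⟨p + N * qn, by nlinarith [hq], ?_⟩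
      have h1 : ¬ p + N * qn < p := by omega
      simp only [hcfgJ, if_neg h1]
      have h2 : (p + N * qn - p) % qn = 0 := by
        have : p + N * qn - p = N * qn := by omega
        rw [this]
        exact Nat.mul_mod_left N qn
      rw [h2, hfC0]
      have : cst tJ = qF := htF
      rw [this]
      exact hqFF
    refine ⟨Fintype.card (Fin k0 × Fin M), fun x => cfgJ x ∘ e.symm, ?_, ?_, ⟨e tJ, ?_⟩⟩
    · intro t
      show (cfgJ 0 ∘ e.symm) t ∈ I
      have h0 : cfgJ 0 = fun t => c₀ t.1 := by
        by_cases h : 0 < p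
        · simp only [hcfgJ, if_pos h, hfP0]
        · have hp0 : p = 0 := by omega
          have : fP 0 = cst := by rw [← hfPp, hp0]
          simp only [hcfgJ, if_neg (by omega : ¬ (0:ℕ) < p)]
          simp only [hp0, Nat.sub_zero, Nat.zero_mod, hfC0]
          rw [← this, hfP0]
      rw [h0]
      exact hc0I _
    · intro x
      exact hstepsJ x
    · intro N
      obtain ⟨x, hx, hmem⟩ := hvisit N
      refine ⟨x, hx, ?_⟩
      simpa using hmem
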